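/- For all cyclic flats Z0 and Z1 of M⁺: cl_M((Z0 − e) ∪ (Z1 − e)) = cl_{M⁺}(Z0 ∪ Z1) − e. -/

import Mathlib

open Set Matroid
open scoped Classical

namespace Paper

variable {α : Type*}

/-- A circuit of a matroid: a minimal dependent set. -/
def Circuit (M : Matroid α) (C : Set α) : Prop :=
  M.Dep C ∧ ∀ D ⊂ C, M.Indep D

/-- A coloop: an element of the ground set lying in no circuit. -/
def Coloop (M : Matroid α) (x : α) : Prop :=
  x ∈ M.E ∧ ∀ C, Circuit M C → x ∉ C

/-- The set of coloops of a matroid. -/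
def coloops (M : Matroid α) : Set α := {x | Coloop M x}

/-- A cyclic set: a subset of the ground set each of whose elements lies in a
circuit contained in the set (equivalently, the restriction has no coloops). -/
def Cyclic (M : Matroid α) (X : Set α) : Prop :=
  X ⊆ M.E ∧ ∀ x ∈ X, ∃ C, Circuit M C ∧ C ⊆ X ∧ x ∈ C

/-- A cyclic flat: a cyclic set that is also a flat. -/
def CyclicFlat (M : Matroid α) (X : Set α) : Prop :=
  Cyclic M X ∧ M.IsFlat X

/-- The rank of a set: the largest cardinality of an independent subset. -/
noncomputable def rk (M : Matroid α) (X : Set α) : ℕ :=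
  sSup (Set.ncard '' {I | M.Indep I ∧ I ⊆ X})

/-- The nullity of a set: `n(X) = |X| − r(X)`. -/
noncomputable def nullity (M : Matroid α) (X : Set α) : ℤ :=
  (X.ncard : ℤ) - rk M X

/-- Deletion of a single element: `M \ e`. -/
noncomputable def deleteElem (M : Matroid α) (e : α) : Matroid α :=
  M ↾ (M.E \ {e})

/-- Closure in a restriction, for sets contained in the restriction set. -/
lemma restrict_closure_aux (M : Matroid α) {R X : Set α} (hR : R ⊆ M.E) (hXR : X ⊆ R) :
    (M ↾ R).closure X = M.closure X ∩ R := by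
  obtain ⟨I, hI⟩ := (M ↾ R).exists_isBasis X (by simpa [Matroid.restrict_ground_eq] using hXR)
  have hIM : M.IsBasis I X := ((isBasis_restrict_iff hR).mp hI).1
  have hIR : I ⊆ R := hI.subset.trans hXR
  rw [← hI.closure_eq_closure, ← hIM.closure_eq_closure]
  ext y
  have hIi : M.Indep I := hIM.indep
  have hIri : (M ↾ R).Indep I := hIi.indep_restrict_of_subset hIR
  rw [mem_inter_iff, hIri.mem_closure_iff, hIi.mem_closure_iff, restrict_dep_iff]
  constructor
  · rintro (⟨hni, hins⟩ | hyI)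
    · exact ⟨Or.inl (dep_iff.mpr ⟨hni, hins.trans hR⟩), hins (mem_insert y I)⟩
    · exact ⟨Or.inr hyI, hIR hyI⟩
  · rintro ⟨hd | hyI, hyR⟩
    · exact Or.inl ⟨hd.not_indep, insert_subset hyR hIR⟩
    · exact Or.inr hyI

lemma circuit_mem_closure_diff {M : Matroid α} {C : Set α} {e : α}
    (hC : Circuit M C) (heC : e ∈ C) : e ∈ M.closure (C \ {e}) := by
  have hssub : C \ {e} ⊂ C := sdiff_singleton_ssubset.mpr heC
  have hind : M.Indep (C \ {e}) := hC.2 _ hssub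
  rw [hind.mem_closure_iff]
  left
  rw [insert_diff_singleton, insert_eq_of_mem heC]
  exact hC.1

theorem statement_7 (M : Matroid α) (hfin : M.E.Finite) (e : α) (he : e ∈ M.E)
    (Z0 Z1 : Set α) (h0 : CyclicFlat M Z0) (h1 : CyclicFlat M Z1) :
    (deleteElem M e).closure ((Z0 \ {e}) ∪ (Z1 \ {e})) = M.closure (Z0 ∪ Z1) \ {e} := by
  have hZ0E : Z0 ⊆ M.E := h0.1.1
  have hZ1E : Z1 ⊆ M.E := h1.1.1
  have hU : (Z0 \ {e}) ∪ (Z1 \ {e}) = (Z0 ∪ Z1) \ {e} := (union_diff_distrib).symm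
  have hXR : (Z0 ∪ Z1) \ {e} ⊆ M.E \ {e} :=
    diff_subset_diff_left (union_subset hZ0E hZ1E)
  have hcl : M.closure ((Z0 ∪ Z1) \ {e}) = M.closure (Z0 ∪ Z1) := by
    by_cases heU : e ∈ Z0 ∪ Z1
    · apply closure_diff_singleton_eq_closure
      rcases heU with h | h
      · obtain ⟨C, hC, hCZ, heC⟩ := h0.1.2 e h
        exact M.closure_subset_closure
          (diff_subset_diff_left (hCZ.trans subset_union_left))
          (circuit_mem_closure_diff hC heC)
      · obtain ⟨C, hC, hCZ, heC⟩ := h1.1.2 e h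
        exact M.closure_subset_closure
          (diff_subset_diff_left (hCZ.trans subset_union_right))
          (circuit_mem_closure_diff hC heC)
    · rw [diff_singleton_eq_self heU]
  rw [deleteElem, hU, restrict_closure_aux M diff_subset hXR, hcl]
  ext y
  simp only [mem_inter_iff, mem_diff, mem_singleton_iff]
  exact ⟨fun ⟨h1, _, h3⟩ => ⟨h1, h3⟩, fun ⟨h1, h2⟩ => ⟨h1, M.closure_subset_ground _ h1, h2⟩⟩

end Paper
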